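/- Let ξ be standard normal and q > 1. Then η = |ξ|^{2/q} − E[|ξ|^{2/q}] belongs to Sub_{φ_p}(Ω), where 1/p + 1/q = 1. -/

import Mathlib

open MeasureTheory Real Filter
open scoped ENNReal NNReal
open ProbabilityTheory

noncomputable def phi (p x : ℝ) : ℝ :=
  if |x| ≤ 1 then x ^ 2 / 2 else |x| ^ p / p - 1 / p + 1 / 2

lemma exp_le_quad (x : ℝ) : rexp x ≤ 1 + x + x ^ 2 * rexp |x| := by
  rcases le_or_gt x 0 with hx | hx
  · have h2 : 1 - x ≤ rexp (-x) := by linarith [Real.add_one_le_exp (-x)]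
    have h3 : rexp x * rexp (-x) = 1 := by rw [← Real.exp_add]; simp
    have h5 : (1:ℝ) ≤ rexp |x| := Real.one_le_exp (abs_nonneg x)
    have h1 : rexp x ≤ 1 + x + x ^ 2 := by
      nlinarith [Real.exp_pos (-x), Real.exp_pos x, sq_nonneg x,
        mul_nonneg (mul_nonneg (neg_nonneg.2 hx) (neg_nonneg.2 hx)) (neg_nonneg.2 hx)]
    nlinarith [sq_nonneg x]
  · have hxa : |x| = x := abs_of_pos hx
    have a0 : (0:ℝ) < rexp (x/2) := Real.exp_pos _
    have h1 : (1:ℝ) ≤ rexp (x/2) := Real.one_le_exp (by linarith)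
    have h2 : rexp (x/2) * (1 - x/2) ≤ 1 := by
      have h := Real.add_one_le_exp (-(x/2))
      have h3 : rexp (x/2) * rexp (-(x/2)) = 1 := by rw [← Real.exp_add]; simp
      nlinarith
    have h4 : rexp (x/2) * rexp (x/2) = rexp x := by rw [← Real.exp_add]; ring_nf
    rw [hxa]
    nlinarith [sq_nonneg (x * rexp (x/2)), mul_pos a0 a0, sq_nonneg x,
      mul_le_mul_of_nonneg_left h2 (le_of_lt hx), mul_le_mul_of_nonneg_left h1 (sq_nonneg x)]

lemma sq_le_four_exp {t : ℝ} (ht : 0 ≤ t) : t ^ 2 ≤ 4 * rexp t := by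
  have h := Real.add_one_le_exp (t/2)
  have h2 : rexp (t/2) * rexp (t/2) = rexp t := by rw [← Real.exp_add]; ring_nf
  nlinarith [Real.exp_pos (t/2)]

lemma gauss_int_quarter :
    Integrable (fun x : ℝ => rexp (x ^ 2 / 4)) (gaussianReal 0 1) ∧
      ∫ x, rexp (x ^ 2 / 4) ∂(gaussianReal 0 1) ≤ 2 := by
  have hγ : gaussianReal 0 1
      = volume.withDensity (fun x => ((gaussianPDFReal 0 1 x).toNNReal : ℝ≥0∞)) :=
    gaussianReal_of_var_ne_zero 0 one_ne_zero
  have hmeasf : Measurable fun x => (gaussianPDFReal 0 1 x).toNNReal :=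
    (measurable_gaussianPDFReal 0 1).real_toNNReal
  have heq : (fun x => (gaussianPDFReal 0 1 x).toNNReal • rexp (x ^ 2 / 4))
      = fun x : ℝ => (√(2 * π))⁻¹ * rexp (-(4:ℝ)⁻¹ * x ^ 2) := by
    funext x
    rw [NNReal.smul_def, Real.coe_toNNReal _ (gaussianPDFReal_nonneg 0 1 x)]
    simp only [gaussianPDFReal, NNReal.coe_one, mul_one, sub_zero, smul_eq_mul]
    rw [mul_assoc, ← Real.exp_add]
    congr 1
    ring
  have hint : Integrable (fun x => (gaussianPDFReal 0 1 x).toNNReal • rexp (x ^ 2 / 4)) volume := by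
    rw [heq]
    exact (integrable_exp_neg_mul_sq (by norm_num : (0:ℝ) < 4⁻¹)).const_mul _
  constructor
  · rw [hγ]
    exact (integrable_withDensity_iff_integrable_smul hmeasf).mpr hint
  · rw [hγ, integral_withDensity_eq_integral_smul hmeasf, heq]
    rw [integral_const_mul, integral_gaussian]
    have h1 : π / (4:ℝ)⁻¹ = 4 * π := by ring
    have h2 : (2:ℝ) * π > 0 := by positivity
    rw [h1]
    have h3 : √(4 * π) = 2 * √π := by
      rw [show (4:ℝ) * π = 2^2 * π by ring, Real.sqrt_mul (by positivity), Real.sqrt_sq (by norm_num)]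
    have h4 : √(2 * π) ≥ √π := Real.sqrt_le_sqrt (by linarith [pi_pos]) 
    have h5 : (0:ℝ) < √(2*π) := Real.sqrt_pos.mpr h2
    have h6 : (0:ℝ) < √π := Real.sqrt_pos.mpr pi_pos
    rw [h3, inv_mul_eq_div, div_le_iff₀ h5]
    nlinarith

lemma gauss_master {p q : ℝ} (hpq : Real.HolderConjugate p q) (a : ℝ) :
    Integrable (fun x : ℝ => rexp (a * |x| ^ (2 / q))) (gaussianReal 0 1) ∧
      ∫ x, rexp (a * |x| ^ (2 / q)) ∂(gaussianReal 0 1)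
        ≤ 2 * rexp (|a| ^ p / (p * ((q / 4) ^ (1 / q)) ^ p)) := by
  have hq1 : 1 < q := hpq.symm.lt
  have hq0 : 0 < q := by linarith
  set ε : ℝ := (q / 4) ^ (1 / q) with hεdef
  have hε : 0 < ε := Real.rpow_pos_of_pos (by linarith) _
  set K : ℝ := |a| ^ p / (p * ε ^ p) with hK
  have key : ∀ x : ℝ, a * |x| ^ (2 / q) ≤ K + x ^ 2 / 4 := by
    intro x
    have ht : 0 ≤ |x| ^ (2 / q) := Real.rpow_nonneg (abs_nonneg x) _
    have h1 : a * |x| ^ (2 / q) ≤ |a| * |x| ^ (2 / q) :=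
      mul_le_mul_of_nonneg_right (le_abs_self a) ht
    have h2 : |a| * |x| ^ (2 / q) = (|a| / ε) * (ε * |x| ^ (2 / q)) := by
      field_simp
    have h3 := Real.young_inequality_of_nonneg
      (div_nonneg (abs_nonneg a) hε.le) (mul_nonneg hε.le ht) hpq
    have h4 : (|a| / ε) ^ p = |a| ^ p / ε ^ p := Real.div_rpow (abs_nonneg a) hε.le p
    have h5 : (ε * |x| ^ (2 / q)) ^ q = (q / 4) * x ^ 2 := by
      rw [Real.mul_rpow hε.le ht]
      congr 1
      · rw [hεdef, ← Real.rpow_mul (by linarith : (0:ℝ) ≤ q / 4), one_div,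
          inv_mul_cancel₀ (ne_of_gt hq0), Real.rpow_one]
      · rw [← Real.rpow_mul (abs_nonneg x), div_mul_cancel₀ _ (ne_of_gt hq0)]
        rw [show (2:ℝ) = ((2:ℕ):ℝ) by norm_num, Real.rpow_natCast, sq_abs]
    rw [h2] at h1
    have h6 : (|a| / ε) * (ε * |x| ^ (2 / q)) ≤ |a| ^ p / ε ^ p / p + (q / 4) * x ^ 2 / q := by
      rw [← h4, ← h5]; exact h3
    have h7 : |a| ^ p / ε ^ p / p = K := by rw [hK]; ring
    have h8 : (q / 4) * x ^ 2 / q = x ^ 2 / 4 := by field_simp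
    linarith
  have hcont : Continuous fun x : ℝ => rexp (a * |x| ^ (2 / q)) := by
    have : Continuous fun x : ℝ => x ^ (2 / q) := Real.continuous_rpow_const (by positivity)
    exact Real.continuous_exp.comp (continuous_const.mul (this.comp continuous_abs))
  have hbound : ∀ x : ℝ, ‖rexp (a * |x| ^ (2 / q))‖ ≤ rexp K * rexp (x ^ 2 / 4) := by
    intro x
    rw [Real.norm_eq_abs, Real.abs_exp, ← Real.exp_add]
    exact Real.exp_le_exp.mpr (key x)
  have hint : Integrable (fun x : ℝ => rexp (a * |x| ^ (2 / q))) (gaussianReal 0 1) :=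
    Integrable.mono' (gauss_int_quarter.1.const_mul (rexp K))
      hcont.aestronglyMeasurable (ae_of_all _ hbound)
  refine ⟨hint, ?_⟩
  calc ∫ x, rexp (a * |x| ^ (2 / q)) ∂(gaussianReal 0 1)
      ≤ ∫ x, rexp K * rexp (x ^ 2 / 4) ∂(gaussianReal 0 1) := by
        refine integral_mono hint (gauss_int_quarter.1.const_mul _) fun x => ?_
        have := hbound x
        rwa [Real.norm_eq_abs, Real.abs_exp] at this
    _ = rexp K * ∫ x, rexp (x ^ 2 / 4) ∂(gaussianReal 0 1) := integral_const_mul _ _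
    _ ≤ rexp K * 2 := mul_le_mul_of_nonneg_left gauss_int_quarter.2 (Real.exp_pos _).le
    _ = 2 * rexp K := mul_comm _ _

set_option maxHeartbeats 1000000 in
theorem stmt_8 {Ω : Type*} [MeasurableSpace Ω] (μ : Measure Ω) [IsProbabilityMeasure μ]
    (p q : ℝ) (hq : 1 < q) (hpq : 1 / p + 1 / q = 1)
    (ξ : Ω → ℝ) (hmeas : Measurable ξ)
    (hlaw : Measure.map ξ μ = ProbabilityTheory.gaussianReal 0 1)
    (η : Ω → ℝ)
    (hη : η = fun ω => |ξ ω| ^ (2 / q) - ∫ ω', |ξ ω'| ^ (2 / q) ∂μ) :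
    ∃ c : ℝ, 0 ≤ c ∧ ∀ l : ℝ, Real.log (∫ ω, Real.exp (l * η ω) ∂μ) ≤ phi p (c * l) := by
  have hq0 : 0 < q := by linarith
  have h1q : 1 / q < 1 := by rw [div_lt_one hq0]; exact hq
  have h1q0 : 0 < 1 / q := by positivity
  have hip0 : 0 < 1 / p := by linarith
  have hp0 : 0 < p := by
    rcases lt_trichotomy p 0 with h | h | h
    · exfalso; have : 1 / p < 0 := div_neg_of_pos_of_neg one_pos h; linarith
    · exfalso; rw [h] at hpq; simp at hpq; linarith
    · exact h
  have hp1 : 1 < p := by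
    have h2 : 1 / p < 1 := by linarith
    rwa [div_lt_one hp0] at h2
  have hconj : Real.HolderConjugate p q := ⟨by simpa only [one_div, inv_one] using hpq, hp0, hq0⟩
  set m := ∫ ω', |ξ ω'| ^ (2 / q) ∂μ with hm
  clear_value m
  set ε : ℝ := (q / 4) ^ (1 / q) with hεdef
  have hε : 0 < ε := Real.rpow_pos_of_pos (by linarith) _
  clear_value ε
  set A : ℝ := 1 / (p * ε ^ p) with hA
  clear_value A
  have hεp : 0 < ε ^ p := Real.rpow_pos_of_pos hε p
  have hA0 : 0 < A := by rw [hA]; exact div_pos one_pos (mul_pos hp0 hεp)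
  have hcontf : ∀ a : ℝ, Continuous fun x : ℝ => rexp (a * |x| ^ (2 / q)) := by
    intro a
    have h : Continuous fun x : ℝ => x ^ (2 / q) := Real.continuous_rpow_const (by positivity)
    exact Real.continuous_exp.comp (continuous_const.mul (h.comp continuous_abs))
  have hexp_int : ∀ a : ℝ, Integrable (fun ω => rexp (a * |ξ ω| ^ (2 / q))) μ ∧
      ∫ ω, rexp (a * |ξ ω| ^ (2 / q)) ∂μ ≤ 2 * rexp (A * |a| ^ p) := by
    intro a
    obtain ⟨hi, hb⟩ := gauss_master hconj a
    rw [← hεdef] at hb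
    have hfm : AEStronglyMeasurable (fun x : ℝ => rexp (a * |x| ^ (2 / q)))
        (Measure.map ξ μ) := by
      rw [hlaw]; exact (hcontf a).aestronglyMeasurable
    constructor
    · have h2 := (integrable_map_measure hfm hmeas.aemeasurable).mp (by rw [hlaw]; exact hi)
      exact h2
    · have heq : ∫ ω, rexp (a * |ξ ω| ^ (2 / q)) ∂μ
          = ∫ x, rexp (a * |x| ^ (2 / q)) ∂(gaussianReal 0 1) := by
        rw [← hlaw, integral_map hmeas.aemeasurable hfm]
      rw [heq]
      calc ∫ x, rexp (a * |x| ^ (2 / q)) ∂(gaussianReal 0 1)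
          ≤ 2 * rexp (|a| ^ p / (p * ε ^ p)) := hb
        _ = 2 * rexp (A * |a| ^ p) := by rw [hA]; ring_nf
  have hGmeas : Measurable fun ω => |ξ ω| ^ (2 / q) := by
    have h : Continuous fun x : ℝ => |x| ^ (2 / q) :=
      (Real.continuous_rpow_const (by positivity)).comp continuous_abs
    exact h.measurable.comp hmeas
  have hηmeas : Measurable η := by rw [hη]; exact hGmeas.sub measurable_const
  have hGint : Integrable (fun ω => |ξ ω| ^ (2 / q)) μ := by
    refine Integrable.mono' (hexp_int 1).1 hGmeas.aestronglyMeasurable (ae_of_all _ fun ω => ?_)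
    have h0 : 0 ≤ |ξ ω| ^ (2 / q) := Real.rpow_nonneg (abs_nonneg _) _
    rw [Real.norm_eq_abs, abs_of_nonneg h0, show (1:ℝ) * |ξ ω| ^ (2/q) = |ξ ω| ^ (2/q) by ring]
    linarith [Real.add_one_le_exp (|ξ ω| ^ (2 / q))]
  have hm0 : 0 ≤ m := by
    rw [hm]; exact integral_nonneg fun ω => Real.rpow_nonneg (abs_nonneg _) _
  have hηint : Integrable η μ := by rw [hη]; exact hGint.sub (integrable_const m)
  have hη0 : ∫ ω, η ω ∂μ = 0 := by
    rw [hη, integral_sub hGint (integrable_const m), integral_const, probReal_univ, ← hm]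
    simp
  have habs : ∀ ω, |η ω| ≤ |ξ ω| ^ (2 / q) + m := by
    intro ω
    have h0 : 0 ≤ |ξ ω| ^ (2 / q) := Real.rpow_nonneg (abs_nonneg _) _
    simp only [hη]
    rw [abs_le]
    constructor <;> linarith
  have hQint : Integrable (fun ω => η ω ^ 2 * rexp |η ω|) μ := by
    refine Integrable.mono' ((hexp_int 2).1.const_mul (4 * rexp (2 * m)))
      ((hηmeas.pow_const 2).mul hηmeas.abs.exp).aestronglyMeasurable (ae_of_all _ fun ω => ?_)
    have h1 : η ω ^ 2 ≤ 4 * rexp |η ω| := by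
      have h := sq_le_four_exp (abs_nonneg (η ω)); rwa [sq_abs] at h
    have h2 : rexp |η ω| ≤ rexp (|ξ ω| ^ (2 / q) + m) := Real.exp_le_exp.mpr (habs ω)
    have h3 : (0:ℝ) < rexp |η ω| := Real.exp_pos _
    rw [Real.norm_eq_abs, abs_of_nonneg (mul_nonneg (sq_nonneg _) h3.le)]
    calc η ω ^ 2 * rexp |η ω| ≤ (4 * rexp |η ω|) * rexp |η ω| :=
          mul_le_mul_of_nonneg_right h1 h3.le
      _ = 4 * (rexp |η ω| * rexp |η ω|) := by ring
      _ ≤ 4 * (rexp (|ξ ω| ^ (2 / q) + m) * rexp (|ξ ω| ^ (2 / q) + m)) := by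
          nlinarith [Real.exp_pos (|ξ ω| ^ (2 / q) + m)]
      _ = 4 * rexp (2 * m) * rexp (2 * |ξ ω| ^ (2 / q)) := by
          rw [← Real.exp_add, mul_assoc, ← Real.exp_add]
          congr 1
          ring
  set C := ∫ ω, η ω ^ 2 * rexp |η ω| ∂μ with hC
  clear_value C
  have hC0 : 0 ≤ C := by
    rw [hC]; exact integral_nonneg fun ω => mul_nonneg (sq_nonneg _) (Real.exp_pos _).le
  have hexpη : ∀ l : ℝ, Integrable (fun ω => rexp (l * η ω)) μ := by
    intro l
    have heq : (fun ω => rexp (l * η ω))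
        = fun ω => rexp (-(l * m)) * rexp (l * |ξ ω| ^ (2 / q)) := by
      funext ω
      rw [← Real.exp_add]
      simp only [hη]
      congr 1
      ring
    rw [heq]
    exact (hexp_int l).1.const_mul _
  haveI : NeZero μ := ⟨IsProbabilityMeasure.ne_zero μ⟩
  have hEpos : ∀ l : ℝ, 0 < ∫ ω, rexp (l * η ω) ∂μ := fun l => integral_exp_pos (hexpη l)
  have hEub : ∀ l : ℝ, ∫ ω, rexp (l * η ω) ∂μ
      ≤ rexp (-(l * m)) * (2 * rexp (A * |l| ^ p)) := by
    intro l
    have heq : (fun ω => rexp (l * η ω))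
        = fun ω => rexp (-(l * m)) * rexp (l * |ξ ω| ^ (2 / q)) := by
      funext ω
      rw [← Real.exp_add]
      simp only [hη]
      congr 1
      ring
    rw [heq, integral_const_mul]
    exact mul_le_mul_of_nonneg_left (hexp_int l).2 (Real.exp_pos _).le
  have hlogquad : ∀ l : ℝ, |l| ≤ 1 →
      Real.log (∫ ω, rexp (l * η ω) ∂μ) ≤ l ^ 2 * C := by
    intro l hl
    have hint2 : Integrable (fun ω => 1 + l * η ω + l ^ 2 * (η ω ^ 2 * rexp |η ω|)) μ :=
      ((integrable_const 1).add (hηint.const_mul l)).add (hQint.const_mul _)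
    have hle : ∀ ω, rexp (l * η ω) ≤ 1 + l * η ω + l ^ 2 * (η ω ^ 2 * rexp |η ω|) := by
      intro ω
      have h1 := exp_le_quad (l * η ω)
      have h2 : rexp |l * η ω| ≤ rexp |η ω| := by
        apply Real.exp_le_exp.mpr
        rw [abs_mul]
        calc |l| * |η ω| ≤ 1 * |η ω| := mul_le_mul_of_nonneg_right hl (abs_nonneg _)
          _ = |η ω| := one_mul _
      have h3 : (l * η ω) ^ 2 * rexp |l * η ω| ≤ l ^ 2 * (η ω ^ 2 * rexp |η ω|) := by
        rw [mul_pow, mul_assoc]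
        exact mul_le_mul_of_nonneg_left
          (mul_le_mul_of_nonneg_left h2 (sq_nonneg _)) (sq_nonneg _)
      linarith
    have hEq : ∫ ω, rexp (l * η ω) ∂μ ≤ 1 + l ^ 2 * C := by
      calc ∫ ω, rexp (l * η ω) ∂μ
          ≤ ∫ ω, (1 + l * η ω + l ^ 2 * (η ω ^ 2 * rexp |η ω|)) ∂μ :=
            integral_mono (hexpη l) hint2 hle
        _ = 1 + l ^ 2 * C := by
            have e1 : ∫ ω, (1 + l * η ω + l ^ 2 * (η ω ^ 2 * rexp |η ω|)) ∂μ
                = (∫ ω, (1 + l * η ω) ∂μ) + ∫ ω, l ^ 2 * (η ω ^ 2 * rexp |η ω|) ∂μ :=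
              integral_add ((integrable_const 1).add (hηint.const_mul l)) (hQint.const_mul _)
            have e2 : ∫ ω, (1 + l * η ω) ∂μ
                = (∫ _ω, (1:ℝ) ∂μ) + ∫ ω, l * η ω ∂μ :=
              integral_add (integrable_const 1) (hηint.const_mul l)
            rw [e1, e2, integral_const, integral_const_mul, integral_const_mul, hη0, probReal_univ,
              ← hC]
            simp
    have h2 : Real.log (∫ ω, rexp (l * η ω) ∂μ) ≤ Real.log (1 + l ^ 2 * C) :=
      Real.log_le_log (hEpos l) hEq
    have h3 : Real.log (1 + l ^ 2 * C) ≤ l ^ 2 * C := by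
      have h4 := Real.log_le_sub_one_of_pos
        (show (0:ℝ) < 1 + l ^ 2 * C by nlinarith [sq_nonneg l])
      linarith
    linarith
  -- choose c
  obtain ⟨c, hc1, hcsq, hcmid, hclin⟩ :
      ∃ c : ℝ, 1 ≤ c ∧ 2 * C ≤ c ^ 2 ∧ p * C + 2 * C ≤ c ∧ p * (m + 1 + A) + 1 ≤ c := by
    refine ⟨max 1 (max (Real.sqrt (2 * C)) (max (p * C + 2 * C) (p * (m + 1 + A) + 1))),
      le_max_left _ _, ?_, ?_, ?_⟩
    · have h1 : Real.sqrt (2 * C)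
          ≤ max 1 (max (Real.sqrt (2 * C)) (max (p * C + 2 * C) (p * (m + 1 + A) + 1))) :=
        le_trans (le_max_left _ _) (le_max_right _ _)
      have h2 := Real.sq_sqrt (show (0:ℝ) ≤ 2 * C by linarith)
      nlinarith [Real.sqrt_nonneg (2 * C)]
    · exact le_trans (le_max_left _ _) (le_trans (le_max_right _ _) (le_max_right _ _))
    · exact le_trans (le_max_right _ _) (le_trans (le_max_right _ _) (le_max_right _ _))
  have hc0 : (0:ℝ) < c := lt_of_lt_of_le one_pos hc1
  have hcpC : p * C ≤ c := by nlinarith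
  have hc2C : 2 * C ≤ c := by nlinarith
  have hclarge : p * (m + 1 + A) + 1 ≤ c ^ p := by
    have h3 : c ^ (1:ℝ) ≤ c ^ p := Real.rpow_le_rpow_of_exponent_le hc1 hp1.le
    rw [Real.rpow_one] at h3
    linarith
  refine ⟨c, hc0.le, fun l => ?_⟩
  by_cases hcase : |c * l| ≤ 1
  · rw [phi, if_pos hcase]
    have hl1 : |l| ≤ 1 := by
      rw [abs_mul, abs_of_pos hc0] at hcase
      calc |l| ≤ c * |l| := le_mul_of_one_le_left (abs_nonneg _) hc1
        _ ≤ 1 := hcase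
    have h1 := hlogquad l hl1
    have h4 : l ^ 2 * C ≤ (c * l) ^ 2 / 2 := by
      nlinarith [mul_le_mul_of_nonneg_left hcsq (sq_nonneg l)]
    linarith
  · rw [phi, if_neg hcase]
    push_neg at hcase
    have habscl : |c * l| = c * |l| := by rw [abs_mul, abs_of_pos hc0]
    have hvpow : |c * l| ^ p = c ^ p * |l| ^ p := by
      rw [habscl, Real.mul_rpow hc0.le (abs_nonneg l)]
    have hlog2 : Real.log 2 ≤ 1 := by
      have h := Real.log_le_sub_one_of_pos (show (0:ℝ) < 2 by norm_num); linarith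
    by_cases hl1 : |l| ≤ 1
    · -- medium case : 1 < |c*l|, |l| ≤ 1 : use quadratic bound
      set v := |c * l| ^ p with hv
      have hv1 : 1 < v := by
        rw [hv]
        calc (1:ℝ) = 1 ^ p := (Real.one_rpow p).symm
          _ < |c * l| ^ p := Real.rpow_lt_rpow (by norm_num) hcase (by linarith)
      have hvc : l ^ 2 * c ≤ v := by
        have h6 : c * |l| ≤ (c * |l|) ^ p := by
          nth_rewrite 1 [← Real.rpow_one (c * |l|)]
          exact Real.rpow_le_rpow_of_exponent_le (by rw [← habscl]; exact hcase.le) hp1.le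
        have h7 : l ^ 2 ≤ |l| := by
          rw [← sq_abs]
          nlinarith [abs_nonneg l]
        have h8 : l ^ 2 * c ≤ |l| * c := mul_le_mul_of_nonneg_right h7 hc0.le
        rw [hv, habscl]
        calc l ^ 2 * c ≤ |l| * c := h8
          _ = c * |l| := mul_comm _ _
          _ ≤ (c * |l|) ^ p := h6
      have key : 2 * p * (C * v) ≤ c * (2 * (v - 1)) + c * p := by
        have k1 : p * C * (v - 1) ≤ c * (v - 1) :=
          mul_le_mul_of_nonneg_right hcpC (by linarith)
        have k2 : 2 * C * p ≤ c * p :=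
          mul_le_mul_of_nonneg_right hc2C (by linarith)
        nlinarith
      have hfin : l ^ 2 * C ≤ v / p - 1 / p + 1 / 2 := by
        have hpos : (0:ℝ) < 2 * p * c := by positivity
        have e1 : (v / p - 1 / p + 1 / 2) * (2 * p * c) = c * (2 * (v - 1)) + c * p := by
          field_simp
        have h9 : l ^ 2 * C * (2 * p * c) ≤ (v / p - 1 / p + 1 / 2) * (2 * p * c) := by
          rw [e1]
          calc l ^ 2 * C * (2 * p * c) = (l ^ 2 * c) * (C * (2 * p)) := by ring
            _ ≤ v * (C * (2 * p)) := by
                apply mul_le_mul_of_nonneg_right hvc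
                positivity
            _ = 2 * p * (C * v) := by ring
            _ ≤ c * (2 * (v - 1)) + c * p := key
        exact le_of_mul_le_mul_right h9 hpos
      have h1 := hlogquad l hl1
      linarith
    · -- large case : |l| > 1
      push_neg at hl1
      have hE := hEub l
      have hlogE : Real.log (∫ ω, rexp (l * η ω) ∂μ)
          ≤ -(l * m) + (Real.log 2 + A * |l| ^ p) := by
        calc Real.log (∫ ω, rexp (l * η ω) ∂μ)
            ≤ Real.log (rexp (-(l * m)) * (2 * rexp (A * |l| ^ p))) :=
              Real.log_le_log (hEpos l) hE
          _ = -(l * m) + (Real.log 2 + A * |l| ^ p) := by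
              rw [Real.log_mul (Real.exp_pos _).ne' (by positivity),
                Real.log_exp, Real.log_mul two_ne_zero (Real.exp_pos _).ne', Real.log_exp]
      have h1l : (1:ℝ) ≤ |l| ^ p := by
        calc (1:ℝ) = 1 ^ p := (Real.one_rpow p).symm
          _ ≤ |l| ^ p := Real.rpow_le_rpow (by norm_num) hl1.le (by linarith)
      have hlp : |l| ≤ |l| ^ p := by
        nth_rewrite 1 [← Real.rpow_one |l|]
        exact Real.rpow_le_rpow_of_exponent_le hl1.le hp1.le
      have hlm : -(l * m) ≤ m * |l| ^ p := by
        have k1 : -(l * m) = (-l) * m := by ring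
        have k2 : (-l) * m ≤ |l| * m := mul_le_mul_of_nonneg_right (neg_le_abs l) hm0
        have k3 : |l| * m ≤ |l| ^ p * m := mul_le_mul_of_nonneg_right hlp hm0
        rw [k1]
        calc (-l) * m ≤ |l| * m := k2
          _ ≤ |l| ^ p * m := k3
          _ = m * |l| ^ p := mul_comm _ _
      have hcrude : Real.log (∫ ω, rexp (l * η ω) ∂μ)
          ≤ m * |l| ^ p + |l| ^ p + A * |l| ^ p := by
        have h2 : Real.log 2 ≤ |l| ^ p := le_trans hlog2 h1l
        linarith
      rw [hvpow]
      have hlpn : (0:ℝ) ≤ |l| ^ p := by linarith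
      have h4 : (p * (m + 1 + A) + 1) * |l| ^ p ≤ c ^ p * |l| ^ p :=
        mul_le_mul_of_nonneg_right hclarge hlpn
      have hfin : m * |l| ^ p + |l| ^ p + A * |l| ^ p
          ≤ c ^ p * |l| ^ p / p - 1 / p + 1 / 2 := by
        have hpos : (0:ℝ) < 2 * p := by positivity
        have e1 : (c ^ p * |l| ^ p / p - 1 / p + 1 / 2) * (2 * p)
            = 2 * (c ^ p * |l| ^ p) - 2 + p := by
          field_simp
        have h9 : (m * |l| ^ p + |l| ^ p + A * |l| ^ p) * (2 * p)
            ≤ (c ^ p * |l| ^ p / p - 1 / p + 1 / 2) * (2 * p) := by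
          rw [e1]
          nlinarith
        exact le_of_mul_le_mul_right h9 hpos
      linarith
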